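/- Let K ⊆ X′′ be a cone containing 0 such that z + n ∈ K whenever z ∈ K and n ∈ X′′ with n ≤ 0, and let K̄ denote the closure of K in the norm topology of X′′. Then for every a ∈ X′′ one has D(a;K) = D(a;K̄) ≤ ‖a‖; moreover, if D(a;K) > −∞, then there exists z_a ∈ K̄ satisfying a = z_a + D(a;K̄)•I(e). -/

import Mathlib

open NormedSpace

/-- Positivity in the dual of an ordered normed space: `η ≥ 0` iff `η f ≥ 0`
for every `f ≥ 0`. -/
def dualNonneg (X : Type*) [NormedAddCommGroup X] [NormedSpace ℝ X] [Lattice X]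
    (η : StrongDual ℝ X) : Prop :=
  ∀ f : X, 0 ≤ f → 0 ≤ η f

/-- Positivity in the bidual: `a ≥ 0` iff `a η ≥ 0` for every `η ≥ 0` in the dual. -/
def bidualNonneg (X : Type*) [NormedAddCommGroup X] [NormedSpace ℝ X] [Lattice X]
    (a : StrongDual ℝ (StrongDual ℝ X)) : Prop :=
  ∀ η : StrongDual ℝ X, dualNonneg X η → 0 ≤ a η

/-- The value of the dual problem `D(a; K)`, as an extended real number
(with `inf ∅ = +∞`). -/
noncomputable def Dval (X : Type*) [NormedAddCommGroup X] [NormedSpace ℝ X] [Lattice X]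
    (e : X) (K : Set (StrongDual ℝ (StrongDual ℝ X))) (a : StrongDual ℝ (StrongDual ℝ X)) : EReal :=
  sInf {x : EReal | ∃ c : ℝ, x = (c : EReal) ∧
    ∃ z ∈ K, c • (inclusionInDoubleDual ℝ X e) + z = a}

private lemma ereal_le_of_forall_add (x : EReal) (c : ℝ)
    (h : ∀ ε : ℝ, 0 < ε → x ≤ ((c + ε : ℝ) : EReal)) : x ≤ (c : EReal) := by
  by_contra hc
  push_neg at hc
  obtain ⟨r, hr1, hr2⟩ := EReal.exists_between_coe_real hc
  have hcr : c < r := by exact_mod_cast hr1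
  have h2 := h (r - c) (by linarith)
  have hre : c + (r - c) = r := by ring
  rw [hre] at h2
  exact absurd (lt_of_le_of_lt h2 hr2) (lt_irrefl _)


theorem stmt0
    (X : Type*) [NormedAddCommGroup X] [Lattice X] [IsOrderedAddMonoid X] [HasSolidNorm X] [NormedSpace ℝ X] [CompleteSpace X]
    -- `e` is a positive order unit inducing the lattice norm of the AM-space `X`
    (e : X) (he : 0 ≤ e)
    (hnorm : ∀ f : X, ‖f‖ = sInf {c : ℝ | -(c • e) ≤ f ∧ f ≤ c • e})
    -- the corresponding formula for the bidual norm
    (hbnorm : ∀ a : StrongDual ℝ (StrongDual ℝ X), ‖a‖ = sInf {c : ℝ |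
      bidualNonneg X (a + c • inclusionInDoubleDual ℝ X e) ∧
      bidualNonneg X (c • inclusionInDoubleDual ℝ X e - a)})
    -- `K` is a cone containing `0`
    (K : Set (StrongDual ℝ (StrongDual ℝ X)))
    (hK0 : (0 : StrongDual ℝ (StrongDual ℝ X)) ∈ K)
    (hKcone : ∀ z ∈ K, ∀ t : ℝ, 0 ≤ t → t • z ∈ K)
    -- `K` is stable under addition of nonpositive elements of the bidual
    (hKmono : ∀ z ∈ K, ∀ n : StrongDual ℝ (StrongDual ℝ X), bidualNonneg X (-n) → z + n ∈ K)
    (a : StrongDual ℝ (StrongDual ℝ X)) :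
    Dval X e K a = Dval X e (closure K) a ∧
    Dval X e K a ≤ ((‖a‖ : ℝ) : EReal) ∧
    (⊥ < Dval X e K a →
      ∃ za ∈ closure K, ∃ d : ℝ, (d : EReal) = Dval X e (closure K) a ∧
        a = za + d • inclusionInDoubleDual ℝ X e) := by
  set Ie := inclusionInDoubleDual ℝ X e with hIe
  -- basic positivity facts
  have hIe_pos : bidualNonneg X Ie := fun η hη => hη e he
  have bn_add : ∀ u v : StrongDual ℝ (StrongDual ℝ X), bidualNonneg X u → bidualNonneg X v →
      bidualNonneg X (u + v) := by
    intro u v hu hv η hη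
    have := add_nonneg (hu η hη) (hv η hη)
    simpa using this
  have bn_smul : ∀ t : ℝ, 0 ≤ t → bidualNonneg X (t • Ie) := by
    intro t ht η hη
    have := mul_nonneg ht (hIe_pos η hη)
    simpa using this
  -- key consequence of the bidual norm formula
  have hnormS : ∀ (w : StrongDual ℝ (StrongDual ℝ X)) (ε : ℝ), ‖w‖ < ε →
      bidualNonneg X (ε • Ie - w) ∧ bidualNonneg X (w + ε • Ie) := by
    intro w ε hε
    set S := {c : ℝ | bidualNonneg X (w + c • Ie) ∧ bidualNonneg X (c • Ie - w)} with hS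
    have hw : ‖w‖ = sInf S := hbnorm w
    have hup : ∀ c ∈ S, ∀ c', c ≤ c' → c' ∈ S := by
      intro c hc c' hcc'
      constructor
      · have h1 := bn_add _ _ hc.1 (bn_smul (c' - c) (by linarith))
        have he1 : w + c' • Ie = (w + c • Ie) + (c' - c) • Ie := by module
        rw [he1]; exact h1
      · have h1 := bn_add _ _ hc.2 (bn_smul (c' - c) (by linarith))
        have he1 : c' • Ie - w = (c • Ie - w) + (c' - c) • Ie := by module
        rw [he1]; exact h1
    have hSne : S.Nonempty := by
      by_contra hne
      rw [Set.not_nonempty_iff_eq_empty] at hne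
      have h0 : ‖w‖ = 0 := by rw [hw, hne, Real.sInf_empty]
      have hw0 : w = 0 := (norm_eq_zero (E := StrongDual ℝ (StrongDual ℝ X))).mp h0
      have h0S : (0:ℝ) ∈ S := by
        subst hw0
        constructor <;> · intro η hη; simp
      rw [hne] at h0S; exact h0S
    have hex : ∃ s ∈ S, s < ε := by
      by_cases hbd : BddBelow S
      · have : sInf S < ε := by rw [← hw]; exact hε
        exact (csInf_lt_iff hbd hSne).mp this
      · rw [not_bddBelow_iff] at hbd
        exact hbd ε
    obtain ⟨s, hs, hsε⟩ := hex
    have := hup s hs ε (le_of_lt hsε)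
    exact ⟨this.2, this.1⟩
  -- feasible sets
  set F : Set (StrongDual ℝ (StrongDual ℝ X)) → Set ℝ := fun C => {c | a - c • Ie ∈ C} with hF
  have hDval : ∀ C : Set (StrongDual ℝ (StrongDual ℝ X)), Dval X e C a = sInf (Real.toEReal '' F C) := by
    intro C
    unfold Dval
    congr 1
    ext x
    constructor
    · rintro ⟨c, rfl, z, hz, hzc⟩
      refine ⟨c, ?_, rfl⟩
      have : z = a - c • Ie := by rw [← hzc]; abel
      rw [hF]; simpa [← this] using hz
    · rintro ⟨c, hc, rfl⟩
      refine ⟨c, rfl, a - c • Ie, hc, by abel⟩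
  -- the norm gives feasible points for K
  have hFK_norm : ∀ ε : ℝ, 0 < ε → ‖a‖ + ε ∈ F K := by
    intro ε hε
    have hlt : ‖a‖ < ‖a‖ + ε := by linarith
    have hb := (hnormS a (‖a‖ + ε) hlt).1
    have hb' : bidualNonneg X (-(a - (‖a‖ + ε) • Ie)) := by
      have : -(a - (‖a‖ + ε) • Ie) = (‖a‖ + ε) • Ie - a := by abel
      rw [this]; exact hb
    have := hKmono 0 hK0 (a - (‖a‖ + ε) • Ie) hb'
    show a - (‖a‖ + ε) • Ie ∈ K
    simpa using this
  -- closure feasibility approximated by K feasibility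
  have hFcl_eps : ∀ c ∈ F (closure K), ∀ ε : ℝ, 0 < ε → c + ε ∈ F K := by
    intro c hc ε hε
    have hz : a - c • Ie ∈ closure K := hc
    obtain ⟨z', hz', hd⟩ := (Metric.mem_closure_iff (α := StrongDual ℝ (StrongDual ℝ X))).mp hz ε hε
    have hlt : ‖(a - c • Ie) - z'‖ < ε := by
      exact (dist_eq_norm (E := StrongDual ℝ (StrongDual ℝ X)) (a - c • Ie) z') ▸ hd
    have hb := (hnormS ((a - c • Ie) - z') ε hlt).1
    have hb' : bidualNonneg X (-((a - c • Ie) - z' - ε • Ie)) := by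
      have : -((a - c • Ie) - z' - ε • Ie) = ε • Ie - ((a - c • Ie) - z') := by abel
      rw [this]; exact hb
    have hm := hKmono z' hz' ((a - c • Ie) - z' - ε • Ie) hb'
    have heq : z' + ((a - c • Ie) - z' - ε • Ie) = a - (c + ε) • Ie := by module
    rw [heq] at hm
    exact hm
  -- (1) equality of values
  have hKsub : F K ⊆ F (closure K) := fun c hc => subset_closure hc
  have heqv : Dval X e K a = Dval X e (closure K) a := by
    rw [hDval K, hDval (closure K)]
    apply le_antisymm
    · apply le_sInf
      rintro b ⟨c, hc, rfl⟩
      apply ereal_le_of_forall_add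
      intro ε hε
      exact sInf_le ⟨c + ε, hFcl_eps c hc ε hε, rfl⟩
    · exact sInf_le_sInf (Set.image_mono hKsub)
  refine ⟨heqv, ?_, ?_⟩
  -- (2) bound by the norm
  · rw [hDval K]
    apply ereal_le_of_forall_add
    intro ε hε
    exact sInf_le ⟨‖a‖ + ε, hFK_norm ε hε, rfl⟩
  -- (3) attainment
  · intro hbot
    rw [heqv] at hbot
    have hne : (F (closure K)).Nonempty := ⟨‖a‖ + 1, hKsub (hFK_norm 1 one_pos)⟩
    have hcont : Continuous fun c : ℝ => a - c • Ie := by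
      exact continuous_const.sub (continuous_id.smul (continuous_const (y := Ie)))
    have hclosed : IsClosed (F (closure K)) := isClosed_closure.preimage hcont
    have hbdd : BddBelow (F (closure K)) := by
      by_contra hb
      obtain ⟨r, hr1, hr2⟩ := EReal.exists_between_coe_real hbot
      rw [not_bddBelow_iff] at hb
      obtain ⟨c, hcF, hcr⟩ := hb r
      have h1 : Dval X e (closure K) a ≤ (c : EReal) := by
        rw [hDval (closure K)]
        exact sInf_le ⟨c, hcF, rfl⟩
      have h2 : (c : EReal) < (r : EReal) := by exact_mod_cast hcr
      exact absurd ((h1.trans_lt h2).trans hr2) (lt_irrefl _)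
    set d := sInf (F (closure K)) with hd
    have hdF : d ∈ F (closure K) := hclosed.csInf_mem hne hbdd
    refine ⟨a - d • Ie, hdF, d, ?_, by abel⟩
    rw [hDval (closure K)]
    apply le_antisymm
    · apply le_sInf
      rintro b ⟨c, hc, rfl⟩
      exact_mod_cast csInf_le hbdd hc
    · exact sInf_le ⟨d, hdF, rfl⟩
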